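/- Let μ₀ be a probability measure on ℝ with M(λ) < ∞ for all λ and unbounded support from above. For a ∈ (0,∞), the constrained entropy minimization inf{h(μ | μ₀) : μ ∈ P(ℝ), ∫|x|dμ < ∞, ∫x dμ = a} is attained uniquely by the exponential tilt μ_λ with dμ_λ = e^{λx}/M(λ) dμ₀ and λ = λ(a) chosen so that ∫x dμ_λ = a; moreover for any competitor μ with mean a, h(μ | μ₀) = h(μ | μ_λ) + h(μ_λ | μ₀). -/

import Mathlib

open MeasureTheory Filter Real Set
open scoped ENNReal NNReal Topology

lemma aux_abs_le (x : ℝ) : |x| ≤ Real.exp x + Real.exp (-x) := by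
  rcases le_or_gt 0 x with h | h
  · rw [abs_of_nonneg h]
    nlinarith [Real.add_one_le_exp x, Real.exp_pos (-x)]
  · rw [abs_of_neg h]
    nlinarith [Real.add_one_le_exp (-x), Real.exp_pos x]

lemma aux_exp_le {u v t : ℝ} (x : ℝ) (hu : u ≤ t) (hv : t ≤ v) :
    Real.exp (t * x) ≤ Real.exp (u * x) + Real.exp (v * x) := by
  rcases le_or_gt 0 x with h | h
  · have h1 : Real.exp (t * x) ≤ Real.exp (v * x) :=
      Real.exp_le_exp.mpr (by nlinarith)
    nlinarith [Real.exp_pos (u * x)]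
  · have h1 : Real.exp (t * x) ≤ Real.exp (u * x) :=
      Real.exp_le_exp.mpr (by nlinarith)
    nlinarith [Real.exp_pos (v * x)]

lemma aux_xexp_bound (s x : ℝ) :
    |x * Real.exp (s * x)| ≤ Real.exp ((s + 1) * x) + Real.exp ((s - 1) * x) := by
  rw [abs_mul, abs_of_pos (Real.exp_pos _)]
  have h1 : |x| * Real.exp (s * x) ≤ (Real.exp x + Real.exp (-x)) * Real.exp (s * x) :=
    mul_le_mul_of_nonneg_right (aux_abs_le x) (Real.exp_pos _).le
  calc |x| * Real.exp (s * x) ≤ (Real.exp x + Real.exp (-x)) * Real.exp (s * x) := h1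
    _ = Real.exp ((s + 1) * x) + Real.exp ((s - 1) * x) := by
        rw [add_mul, ← Real.exp_add, ← Real.exp_add]
        ring_nf

lemma aux_int_xexp (μ₀ : Measure ℝ)
    (hM : ∀ lam : ℝ, Integrable (fun x => Real.exp (lam * x)) μ₀) (s : ℝ) :
    Integrable (fun x => x * Real.exp (s * x)) μ₀ := by
  refine ((hM (s + 1)).add (hM (s - 1))).mono ?_ ?_
  · exact (measurable_id.mul ((measurable_const.mul measurable_id).exp)).aestronglyMeasurable
  · refine Filter.Eventually.of_forall fun x => ?_
    have h := aux_xexp_bound s x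
    have h2 : (0:ℝ) ≤ Real.exp ((s + 1) * x) + Real.exp ((s - 1) * x) := by positivity
    simp only [Pi.add_apply, Real.norm_eq_abs]
    rw [abs_of_nonneg h2]
    exact h

lemma relEnt_aux {μ ν : Measure ℝ} [IsProbabilityMeasure μ] [IsProbabilityMeasure ν]
    (hμν : μ ≪ ν) (hint : Integrable (llr μ ν) μ) :
    0 ≤ ∫ x, llr μ ν x ∂μ ∧ ((∫ x, llr μ ν x ∂μ) = 0 → μ = ν) := by
  set g : ℝ → ℝ := fun x => (μ.rnDeriv ν x).toReal with hg
  have hgint : Integrable g ν := Measure.integrable_toReal_rnDeriv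
  have hT1 : Integrable (fun x => g x * llr μ ν x) ν := by
    simpa [smul_eq_mul] using (integrable_rnDeriv_smul_iff hμν).mpr hint
  have hT2 : ∫ x, g x * llr μ ν x ∂ν = ∫ x, llr μ ν x ∂μ := by
    simpa [smul_eq_mul] using integral_rnDeriv_smul hμν (f := llr μ ν)
  have hT3 : ∫ x, g x ∂ν = 1 := by
    rw [hg, Measure.integral_toReal_rnDeriv hμν]; simp
  have hllr : ∀ x, llr μ ν x = Real.log (g x) := fun x => rfl
  set φ : ℝ → ℝ := fun x => g x * llr μ ν x - g x + 1 with hφ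
  have hφint : Integrable φ ν := (hT1.sub hgint).add (integrable_const 1)
  have key : ∀ x, 0 ≤ φ x ∧ (φ x = 0 → g x = 1) := by
    intro x
    have hg0 : 0 ≤ g x := ENNReal.toReal_nonneg
    rcases eq_or_lt_of_le hg0 with h | h
    · constructor
      · simp [hφ, hllr, ← h]
      · intro h0
        simp [hφ, hllr, ← h] at h0
    · by_cases h1 : g x = 1
      · constructor
        · simp [hφ, hllr, h1]
        · intro _; exact h1
      · have hlog : Real.log (g x)⁻¹ < (g x)⁻¹ - 1 :=
          Real.log_lt_sub_one_of_pos (inv_pos.mpr h) (by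
            simp only [ne_eq, inv_eq_one]; exact h1)
        rw [Real.log_inv] at hlog
        have hpos : 0 < φ x := by
          have := hllr x
          rw [hφ]
          simp only
          rw [this]
          have h2 : (g x) * (-Real.log (g x)) < (g x) * ((g x)⁻¹ - 1) :=
            mul_lt_mul_of_pos_left hlog h
          rw [mul_sub, mul_inv_cancel₀ h.ne'] at h2
          nlinarith
        exact ⟨hpos.le, fun h0 => absurd h0 hpos.ne'⟩
  have hφnonneg : ∀ x, 0 ≤ φ x := fun x => (key x).1
  have hint_eq : ∫ x, φ x ∂ν = ∫ x, llr μ ν x ∂μ := by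
    have hsub : Integrable (fun x => g x * llr μ ν x - g x) ν := hT1.sub hgint
    have : ∫ x, φ x ∂ν = ∫ x, (g x * llr μ ν x - g x) + 1 ∂ν := rfl
    rw [this, integral_add hsub (integrable_const 1), integral_sub hT1 hgint, hT2, hT3]
    simp
  refine ⟨by rw [← hint_eq]; exact integral_nonneg hφnonneg, fun h0 => ?_⟩
  have hzero : ∫ x, φ x ∂ν = 0 := by rw [hint_eq, h0]
  have hae : φ =ᵐ[ν] 0 :=
    (integral_eq_zero_iff_of_nonneg hφnonneg hφint).mp hzero
  have hg1 : (fun x => μ.rnDeriv ν x) =ᵐ[ν] fun _ => 1 := by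
    filter_upwards [hae, Measure.rnDeriv_lt_top μ ν] with x hx hlt
    have : g x = 1 := (key x).2 hx
    rw [hg] at this
    exact (ENNReal.toReal_eq_one_iff _).mp this
  calc μ = ν.withDensity (μ.rnDeriv ν) := (Measure.withDensity_rnDeriv_eq μ ν hμν).symm
    _ = ν.withDensity (fun _ => 1) := withDensity_congr_ae hg1
    _ = ν := by simp

lemma aux_cont_param (μ₀ : Measure ℝ)
    (hM : ∀ lam : ℝ, Integrable (fun x => Real.exp (lam * x)) μ₀)
    (F : ℝ → ℝ → ℝ) (hFm : ∀ s, AEStronglyMeasurable (F s) μ₀)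
    (hFb : ∀ s x, |F s x| ≤ Real.exp ((s + 1) * x) + Real.exp ((s - 1) * x))
    (hFc : ∀ x, Continuous (fun s => F s x)) :
    Continuous (fun s => ∫ x, F s x ∂μ₀) := by
  rw [continuous_iff_continuousAt]
  intro s₀
  apply continuousAt_of_dominated (bound := fun x =>
      2 * (Real.exp ((s₀ + 2) * x) + Real.exp ((s₀ - 2) * x)))
  · exact Filter.Eventually.of_forall fun s => hFm s
  · filter_upwards [Metric.ball_mem_nhds s₀ one_pos] with s hs
    refine Filter.Eventually.of_forall fun x => ?_
    have hd := abs_lt.mp (by simpa [Real.dist_eq] using hs : |s - s₀| < 1)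
    have h2 : Real.exp ((s + 1) * x) ≤ Real.exp ((s₀ - 2) * x) + Real.exp ((s₀ + 2) * x) :=
      aux_exp_le x (by linarith [hd.1]) (by linarith [hd.2])
    have h3 : Real.exp ((s - 1) * x) ≤ Real.exp ((s₀ - 2) * x) + Real.exp ((s₀ + 2) * x) :=
      aux_exp_le x (by linarith [hd.1]) (by linarith [hd.2])
    have h1 := hFb s x
    rw [Real.norm_eq_abs]
    linarith
  · exact ((hM _).add (hM _)).const_mul 2
  · exact Filter.Eventually.of_forall fun x => (hFc x).continuousAt

lemma aux_exists_lam (μ₀ : Measure ℝ) [IsProbabilityMeasure μ₀]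
    (hM : ∀ lam : ℝ, Integrable (fun x => Real.exp (lam * x)) μ₀)
    (hub : ∀ c : ℝ, μ₀ (Set.Ioi c) ≠ 0)
    (hmean : ∫ x, x ∂μ₀ = 0)
    (a : ℝ) (ha : 0 < a) :
    ∃ lam : ℝ, (∫ x, x * Real.exp (lam * x) ∂μ₀) / (∫ x, Real.exp (lam * x) ∂μ₀) = a := by
  set M : ℝ → ℝ := fun s => ∫ x, Real.exp (s * x) ∂μ₀ with hMdef
  set N : ℝ → ℝ := fun s => ∫ x, x * Real.exp (s * x) ∂μ₀ with hNdef
  have hMpos : ∀ s, 0 < M s := fun s => integral_exp_pos (hM s)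
  have hMc : Continuous M := by
    apply aux_cont_param μ₀ hM (fun s x => Real.exp (s * x))
    · exact fun s => (hM s).aestronglyMeasurable
    · intro s x
      rw [abs_of_pos (Real.exp_pos _)]
      nlinarith [aux_exp_le x (le_of_lt (by linarith : s - 1 < s)) (le_of_lt (by linarith : s < s + 1))]
    · exact fun x => Real.continuous_exp.comp (continuous_id.mul continuous_const)
  have hNc : Continuous N := by
    apply aux_cont_param μ₀ hM (fun s x => x * Real.exp (s * x))
    · exact fun s => (aux_int_xexp μ₀ hM s).aestronglyMeasurable
    · exact fun s x => aux_xexp_bound s x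
    · exact fun x => continuous_const.mul (Real.continuous_exp.comp (continuous_id.mul continuous_const))
  have hg : Continuous (fun s => N s / M s) := hNc.div hMc fun s => (hMpos s).ne'
  have hg0 : N 0 / M 0 = 0 := by
    have hN0 : N 0 = 0 := by
      rw [hNdef]; simp only [zero_mul, Real.exp_zero, mul_one]; exact hmean
    rw [hN0, zero_div]
  -- choose s₁
  set c : ℝ := a + 1 with hc
  have hc1 : 1 ≤ c := by linarith
  set p : ℝ := (μ₀ (Set.Ioi (c + 1))).toReal with hp
  have hppos : 0 < p := ENNReal.toReal_pos (hub (c + 1)) (measure_ne_top _ _)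
  have hMlow : ∀ s, 0 ≤ s → Real.exp (s * (c + 1)) * p ≤ M s := by
    intro s hs
    have h1 : ∫ x in Set.Ioi (c + 1), Real.exp (s * x) ∂μ₀ ≤ M s :=
      setIntegral_le_integral (hM s) (Filter.Eventually.of_forall fun x => (Real.exp_pos _).le)
    have h2 : Real.exp (s * (c + 1)) * p ≤ ∫ x in Set.Ioi (c + 1), Real.exp (s * x) ∂μ₀ := by
      refine setIntegral_ge_of_const_le_real measurableSet_Ioi (measure_ne_top _ _)
        (fun x hx => Real.exp_le_exp.mpr (mul_le_mul_of_nonneg_left (le_of_lt hx) hs)) ?_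
      exact (hM s).integrableOn
    linarith
  have hNlow : ∀ s, 1 ≤ s → c * M s - (1 + 2 * c * Real.exp (s * c)) ≤ N s := by
    intro s hs
    have hpt : ∀ x, (c - x) * Real.exp (s * x) ≤ 1 + 2 * c * Real.exp (s * c) := by
      intro x
      rcases le_or_gt c x with h | h
      · have : (c - x) * Real.exp (s * x) ≤ 0 :=
          mul_nonpos_of_nonpos_of_nonneg (by linarith) (Real.exp_pos _).le
        nlinarith [Real.exp_pos (s * c)]
      rcases le_or_gt 0 x with h0 | h0
      · have he : Real.exp (s * x) ≤ Real.exp (s * c) :=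
          Real.exp_le_exp.mpr (mul_le_mul_of_nonneg_left h.le (by linarith))
        have hcx : c - x ≤ c := by linarith
        have : (c - x) * Real.exp (s * x) ≤ c * Real.exp (s * c) :=
          mul_le_mul hcx he (Real.exp_pos _).le (by linarith)
        nlinarith [Real.exp_pos (s * c), Real.one_le_exp (by nlinarith : (0:ℝ) ≤ s * c)]
      · have hsx : Real.exp (s * x) ≤ Real.exp x :=
          Real.exp_le_exp.mpr (by nlinarith)
        have hsx1 : Real.exp (s * x) ≤ 1 := by
          rw [← Real.exp_zero]
          exact Real.exp_le_exp.mpr (by nlinarith)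
        have hx1 : (-x) * Real.exp x ≤ 1 := by
          have h1 : -x ≤ Real.exp (-x) := by nlinarith [Real.add_one_le_exp (-x)]
          have := mul_le_mul_of_nonneg_right h1 (Real.exp_pos x).le
          rw [← Real.exp_add, neg_add_cancel, Real.exp_zero] at this
          linarith
        have hce : (c - x) * Real.exp (s * x) = c * Real.exp (s * x) + (-x) * Real.exp (s * x) := by
          ring
        have hxe : (-x) * Real.exp (s * x) ≤ (-x) * Real.exp x :=
          mul_le_mul_of_nonneg_left hsx (by linarith)
        have hcx : c * Real.exp (s * x) ≤ c := by nlinarith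
        nlinarith [Real.one_le_exp (by nlinarith : (0:ℝ) ≤ s * c), Real.exp_pos (s * c)]
    have hint1 : Integrable (fun x => (c - x) * Real.exp (s * x)) μ₀ := by
      have : (fun x => (c - x) * Real.exp (s * x))
          = fun x => c * Real.exp (s * x) - x * Real.exp (s * x) := by
        funext x; ring
      rw [this]
      exact ((hM s).const_mul c).sub (aux_int_xexp μ₀ hM s)
    have hle : ∫ x, (c - x) * Real.exp (s * x) ∂μ₀ ≤ 1 + 2 * c * Real.exp (s * c) := by
      calc ∫ x, (c - x) * Real.exp (s * x) ∂μ₀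
          ≤ ∫ _, 1 + 2 * c * Real.exp (s * c) ∂μ₀ :=
            integral_mono hint1 (integrable_const _) hpt
        _ = 1 + 2 * c * Real.exp (s * c) := by simp
    have heq : ∫ x, (c - x) * Real.exp (s * x) ∂μ₀ = c * M s - N s := by
      have : (fun x => (c - x) * Real.exp (s * x))
          = fun x => c * Real.exp (s * x) - x * Real.exp (s * x) := by
        funext x; ring
      rw [this, integral_sub ((hM s).const_mul c) (aux_int_xexp μ₀ hM s),
        MeasureTheory.integral_const_mul]
    linarith [hle, heq.symm.le, heq.le]
  set s₁ : ℝ := max 1 (Real.log ((1 + 2 * c) / p)) with hs₁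
  have hs₁1 : 1 ≤ s₁ := le_max_left _ _
  have hkey : 1 + 2 * c * Real.exp (s₁ * c) ≤ M s₁ := by
    have hexp : (1 + 2 * c) / p ≤ Real.exp s₁ := by
      rw [← Real.exp_log (by positivity : (0:ℝ) < (1 + 2 * c) / p)]
      exact Real.exp_le_exp.mpr (le_max_right _ _)
    have h1 : Real.exp (s₁ * (c + 1)) = Real.exp (s₁ * c) * Real.exp s₁ := by
      rw [← Real.exp_add]; ring_nf
    have h2 := hMlow s₁ (by linarith)
    have h3 : (1 + 2 * c) ≤ p * Real.exp s₁ := by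
      rw [div_le_iff₀ hppos] at hexp
      linarith [hexp]
    have h4 : 1 ≤ Real.exp (s₁ * c) := Real.one_le_exp (by nlinarith)
    nlinarith [Real.exp_pos (s₁ * c), Real.exp_pos s₁]
  have hga : a ≤ N s₁ / M s₁ := by
    rw [le_div_iff₀ (hMpos s₁)]
    have := hNlow s₁ hs₁1
    nlinarith [hMpos s₁]
  have h0s₁ : (0:ℝ) ≤ s₁ := by linarith
  have := intermediate_value_Icc h0s₁ (hg.continuousOn)
  have hmem : a ∈ Set.Icc (N 0 / M 0) (N s₁ / M s₁) := by
    rw [hg0]; exact ⟨ha.le, hga⟩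
  obtain ⟨lam, _, hlam⟩ := this hmem
  exact ⟨lam, hlam⟩

open Classical in
/-- Relative entropy `h(μ | ν) = ∫ log(dμ/dν) dμ` when `μ ≪ ν` (and the integral exists),
and `+∞` otherwise. -/
noncomputable def relEnt {α : Type*} [MeasurableSpace α] (μ ν : Measure α) : ℝ≥0∞ :=
  if μ ≪ ν ∧ Integrable (llr μ ν) μ then ENNReal.ofReal (∫ x, llr μ ν x ∂μ) else ⊤

/-- Let `μ₀` be a probability measure on `ℝ` with mean `0`, finite m.g.f.
everywhere and support unbounded from above. For `a ∈ (0,∞)` there is `λ = λ(a)` such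
that the exponential tilt `μ_λ` has mean `a`, the Pythagorean identity
`h(μ | μ₀) = h(μ | μ_λ) + h(μ_λ | μ₀)` holds for every probability measure `μ` with
`∫|x| dμ < ∞` and mean `a`, and `μ_λ` is the unique minimizer of `h(· | μ₀)` among such
measures. -/
theorem stmt17 (μ₀ : Measure ℝ) [IsProbabilityMeasure μ₀]
    (hM : ∀ lam : ℝ, Integrable (fun x => Real.exp (lam * x)) μ₀)
    (hub : ∀ c : ℝ, μ₀ (Set.Ioi c) ≠ 0)
    (hmean : ∫ x, x ∂μ₀ = 0)
    (a : ℝ) (ha : 0 < a) :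
    ∃ lam : ℝ, (∫ x, x ∂(μ₀.tilted (fun x => lam * x)) = a) ∧
      ∀ μ : Measure ℝ, IsProbabilityMeasure μ → Integrable (fun x => |x|) μ →
        (∫ x, x ∂μ = a) →
          relEnt μ μ₀
              = relEnt μ (μ₀.tilted (fun x => lam * x))
                + relEnt (μ₀.tilted (fun x => lam * x)) μ₀
          ∧ relEnt (μ₀.tilted (fun x => lam * x)) μ₀ ≤ relEnt μ μ₀
          ∧ (relEnt μ μ₀ = relEnt (μ₀.tilted (fun x => lam * x)) μ₀ →
              μ = μ₀.tilted (fun x => lam * x)) := by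
  obtain ⟨lam, hlam⟩ := aux_exists_lam μ₀ hM hub hmean a ha
  have hMpos : 0 < ∫ x, Real.exp (lam * x) ∂μ₀ := integral_exp_pos (hM lam)
  have hprob : IsProbabilityMeasure (μ₀.tilted (fun x => lam * x)) :=
    isProbabilityMeasure_tilted (hM lam)
  have hν0 : μ₀.tilted (fun x => lam * x) ≪ μ₀ := tilted_absolutelyContinuous μ₀ _
  have h0ν : μ₀ ≪ μ₀.tilted (fun x => lam * x) := absolutelyContinuous_tilted (hM lam)
  -- mean of the tilted measure
  have hmeanν : ∫ x, x ∂(μ₀.tilted (fun x => lam * x)) = a := by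
    rw [integral_tilted]
    simp only [smul_eq_mul]
    have h1 : ∀ x : ℝ, Real.exp (lam * x) / (∫ y, Real.exp (lam * y) ∂μ₀) * x
        = (x * Real.exp (lam * x)) / (∫ y, Real.exp (lam * y) ∂μ₀) := fun x => by ring
    simp only [h1]
    rw [integral_div]
    exact hlam
  -- integrability of the identity w.r.t. the tilted measure
  have hxν : Integrable (fun x => x) (μ₀.tilted (fun x => lam * x)) := by
    rw [Measure.tilted, integrable_withDensity_iff]
    · have h2 : ∀ x : ℝ, (ENNReal.ofReal (Real.exp (lam * x) / ∫ y, Real.exp (lam * y) ∂μ₀)).toReal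
          = Real.exp (lam * x) / ∫ y, Real.exp (lam * y) ∂μ₀ := fun x =>
        ENNReal.toReal_ofReal (by positivity)
      simp only [h2]
      have h3 : (fun x : ℝ => x * (Real.exp (lam * x) / ∫ y, Real.exp (lam * y) ∂μ₀))
          = fun x => (x * Real.exp (lam * x)) / ∫ y, Real.exp (lam * y) ∂μ₀ := by
        funext x; ring
      rw [h3]
      exact (aux_int_xexp μ₀ hM lam).div_const _
    · exact ((measurable_const.mul measurable_id).exp.div_const _).ennreal_ofReal
    · exact Filter.Eventually.of_forall fun x => ENNReal.ofReal_lt_top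
  have hllrν : llr (μ₀.tilted (fun x => lam * x)) μ₀
      =ᵐ[μ₀.tilted (fun x => lam * x)]
        fun x => lam * x - Real.log (∫ y, Real.exp (lam * y) ∂μ₀) :=
    (log_rnDeriv_tilted_left_self (hM lam)).filter_mono hν0.ae_le
  have hllrint : Integrable (llr (μ₀.tilted (fun x => lam * x)) μ₀)
      (μ₀.tilted (fun x => lam * x)) := by
    rw [integrable_congr hllrν]
    exact (hxν.const_mul lam).sub (integrable_const _)
  have hval : ∫ x, llr (μ₀.tilted (fun x => lam * x)) μ₀ x ∂(μ₀.tilted (fun x => lam * x))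
      = lam * a - Real.log (∫ y, Real.exp (lam * y) ∂μ₀) := by
    rw [integral_congr_ae hllrν,
      integral_sub (hxν.const_mul lam) (integrable_const _),
      MeasureTheory.integral_const_mul, hmeanν]
    simp
  have htnn : 0 ≤ lam * a - Real.log (∫ y, Real.exp (lam * y) ∂μ₀) := by
    rw [← hval]
    exact (relEnt_aux hν0 hllrint).1
  have hrelν : relEnt (μ₀.tilted (fun x => lam * x)) μ₀
      = ENNReal.ofReal (lam * a - Real.log (∫ y, Real.exp (lam * y) ∂μ₀)) := by
    simp only [relEnt]
    rw [if_pos ⟨hν0, hllrint⟩, hval]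
  refine ⟨lam, hmeanν, ?_⟩
  intro μ hpμ hintabs hmeanμ
  have hxμ : Integrable (fun x => x) μ := by
    refine (integrable_norm_iff measurable_id.aestronglyMeasurable).mp ?_
    simpa [Real.norm_eq_abs] using hintabs
  have hfμ : Integrable (fun x => lam * x) μ := hxμ.const_mul lam
  by_cases hc : μ ≪ μ₀ ∧ Integrable (llr μ μ₀) μ
  · have hμν : μ ≪ μ₀.tilted (fun x => lam * x) := hc.1.trans h0ν
    have hintν : Integrable (llr μ (μ₀.tilted (fun x => lam * x))) μ :=
      integrable_llr_tilted_right hc.1 hfμ hc.2 (hM lam)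
    have hIeq : ∫ x, llr μ (μ₀.tilted (fun x => lam * x)) x ∂μ
        = ∫ x, llr μ μ₀ x ∂μ - lam * a + Real.log (∫ y, Real.exp (lam * y) ∂μ₀) := by
      rw [integral_llr_tilted_right hc.1 hfμ (hM lam) hc.2,
        MeasureTheory.integral_const_mul, hmeanμ]
    have hInn : 0 ≤ ∫ x, llr μ (μ₀.tilted (fun x => lam * x)) x ∂μ :=
      (relEnt_aux hμν hintν).1
    have hrelμ0 : relEnt μ μ₀ = ENNReal.ofReal (∫ x, llr μ μ₀ x ∂μ) := by
      simp only [relEnt]; rw [if_pos hc]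
    have hrelμν : relEnt μ (μ₀.tilted (fun x => lam * x))
        = ENNReal.ofReal (∫ x, llr μ (μ₀.tilted (fun x => lam * x)) x ∂μ) := by
      simp only [relEnt]; rw [if_pos ⟨hμν, hintν⟩]
    have hsum : relEnt μ μ₀ = relEnt μ (μ₀.tilted (fun x => lam * x))
        + relEnt (μ₀.tilted (fun x => lam * x)) μ₀ := by
      rw [hrelμ0, hrelμν, hrelν, ← ENNReal.ofReal_add hInn htnn, hIeq]
      congr 1
      ring
    refine ⟨hsum, by rw [hsum]; exact le_add_self, ?_⟩
    intro heq
    have h0 : relEnt μ (μ₀.tilted (fun x => lam * x)) = 0 := by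
      have h1 : relEnt μ (μ₀.tilted (fun x => lam * x))
          + relEnt (μ₀.tilted (fun x => lam * x)) μ₀
          = 0 + relEnt (μ₀.tilted (fun x => lam * x)) μ₀ := by
        rw [← hsum, heq, zero_add]
      exact (ENNReal.add_left_inj (by rw [hrelν]; exact ENNReal.ofReal_ne_top)).mp h1
    rw [hrelμν] at h0
    have hle0 : ∫ x, llr μ (μ₀.tilted (fun x => lam * x)) x ∂μ ≤ 0 :=
      ENNReal.ofReal_eq_zero.mp h0
    exact (relEnt_aux hμν hintν).2 (le_antisymm hle0 hInn)
  · have hcν : ¬ (μ ≪ μ₀.tilted (fun x => lam * x)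
        ∧ Integrable (llr μ (μ₀.tilted (fun x => lam * x))) μ) := by
      rintro ⟨h1, h2⟩
      have hμ0 : μ ≪ μ₀ := h1.trans hν0
      have he := llr_tilted_right hμ0 (hM lam)
      have h3 : llr μ μ₀ =ᵐ[μ] fun x => llr μ (μ₀.tilted (fun x => lam * x)) x
          + lam * x - Real.log (∫ y, Real.exp (lam * y) ∂μ₀) := by
        filter_upwards [he] with x hx
        rw [hx]
        ring
      have hint0 : Integrable (llr μ μ₀) μ := by
        rw [integrable_congr h3]
        exact ((h2.add hfμ).sub (integrable_const _))
      exact hc ⟨hμ0, hint0⟩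
    have htop0 : relEnt μ μ₀ = ⊤ := by simp only [relEnt]; rw [if_neg hc]
    have htopν : relEnt μ (μ₀.tilted (fun x => lam * x)) = ⊤ := by
      simp only [relEnt]; rw [if_neg hcν]
    refine ⟨by rw [htop0, htopν]; simp, by rw [htop0]; exact le_top, ?_⟩
    intro heq
    rw [htop0, hrelν] at heq
    exact absurd heq.symm ENNReal.ofReal_ne_top
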